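/- Let G be an r-SPTG in which all non-final locations are urgent, and fix ν ∈ [0,r]. For every location ℓ such that Val_G(ℓ,ν) < +∞, the (|L|−1)-step bounded value satisfies V^{|L|−1}_ν(ℓ) ≤ (|L|−1)·w_T + w_F, where |L| is the number of locations, w_T the maximal absolute value of a transition weight, and w_F = max over final ℓ′ of max(|φ_{ℓ′}(0)|, |φ_{ℓ′}(r)|). -/

import Mathlib

/-!
Formalization of (simple) priced timed games (SPTGs) following
"One-Clock Priced Timed Games with Negative Weights"
(Brihaye, Geeraerts, Haddad, Lefaucheux, Monmege).
-/

noncomputable section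
open scoped Classical

/-- `f` decomposes, on `[a,b]`, into `n` affine pieces with rational slopes and
rational interior cutpoints.  (This entails in particular that `f` is finite and
continuous on `[a,b]`.) -/
def AffinePiecesOn (f : ℝ → EReal) (a b : ℝ) (n : ℕ) : Prop :=
  ∃ c : ℕ → ℝ, c 0 = a ∧ c n = b ∧ (∀ i < n, c i < c (i + 1)) ∧
    (∀ i, 0 < i → i < n → ∃ q : ℚ, c i = (q : ℝ)) ∧
    (∀ i < n, ∃ (m : ℚ) (q : ℝ), ∀ x : ℝ, c i ≤ x → x ≤ c (i + 1) →
      f x = (((m : ℝ) * x + q : ℝ) : EReal))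

/-- A cost function over `[a,b]`: either constantly `+∞`, or constantly `-∞`, or
continuous and piecewise affine with rational slopes and finitely many rational
cutpoints. -/
def CostFunctionOn (f : ℝ → EReal) (a b : ℝ) : Prop :=
  (∀ x : ℝ, a ≤ x → x ≤ b → f x = ⊤) ∨ (∀ x : ℝ, a ≤ x → x ≤ b → f x = ⊥) ∨
    ∃ n : ℕ, AffinePiecesOn f a b n

/-- `x` and `y` lie in the same interval (open interval or singleton) of the
partition of the line induced by the finite set of points `P`. -/
def sameInt (P : Finset ℚ) (x y : ℝ) : Prop :=
  ∀ p ∈ P, (((p : ℝ) < x) ↔ ((p : ℝ) < y)) ∧ ((x < (p : ℝ)) ↔ (y < (p : ℝ)))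

/-- An `r`-SPTG (simple priced timed game). Locations are partitioned into those of
player Min, player Max and the final ones; some non-final locations are urgent;
transitions carry integer weights, non-final locations carry integer rates, final
locations carry affine final cost functions.  The clock stays in `[0,r]`. -/
structure SPTG where
  Loc : Type
  [fintypeLoc : Fintype Loc]
  [decEqLoc : DecidableEq Loc]
  isMin : Loc → Prop
  isMax : Loc → Prop
  isFin : Loc → Prop
  partition : ∀ ℓ, (isMin ℓ ∧ ¬isMax ℓ ∧ ¬isFin ℓ) ∨ (¬isMin ℓ ∧ isMax ℓ ∧ ¬isFin ℓ) ∨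
    (¬isMin ℓ ∧ ¬isMax ℓ ∧ isFin ℓ)
  isUrg : Loc → Prop
  urg_not_fin : ∀ ℓ, isUrg ℓ → ¬isFin ℓ
  trans : Loc → Loc → Prop
  trans_not_fin : ∀ ℓ ℓ', trans ℓ ℓ' → ¬isFin ℓ
  r : ℝ
  r_nonneg : 0 ≤ r
  r_le_one : r ≤ 1
  finSlope : Loc → ℝ
  finIntercept : Loc → ℝ
  locWt : Loc → ℤ
  transWt : Loc → Loc → ℤ

attribute [instance] SPTG.fintypeLoc SPTG.decEqLoc

namespace SPTG

/-- The final cost functions have rational coefficients (this is part of the paper's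
definition of an SPTG). -/
def ratFinal (G : SPTG) : Prop :=
  ∀ ℓ : G.Loc, (∃ a : ℚ, G.finSlope ℓ = (a : ℝ)) ∧ ∃ b : ℚ, G.finIntercept ℓ = (b : ℝ)

/-- The final cost function `φ_ℓ`. -/
def finalCost (G : SPTG) (ℓ : G.Loc) (ν : ℝ) : ℝ := G.finSlope ℓ * ν + G.finIntercept ℓ

/-- A configuration: a location together with a clock value. -/
abbrev Conf (G : SPTG) := G.Loc × ℝ

def validConf (G : SPTG) (s : G.Conf) : Prop := 0 ≤ s.2 ∧ s.2 ≤ G.r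

/-- A move: a delay `t` together with a transition (determined by its target). -/
structure Move (G : SPTG) where
  t : ℝ
  tgt : G.Loc

/-- The move `m` is available from configuration `s`. -/
def canMove (G : SPTG) (s : G.Conf) (m : G.Move) : Prop :=
  0 ≤ m.t ∧ s.2 + m.t ≤ G.r ∧ G.trans s.1 m.tgt ∧ (G.isUrg s.1 → m.t = 0)

/-- Cost `π(δ) + t·π(ℓ)` of a move. -/
def moveCost (G : SPTG) (s : G.Conf) (m : G.Move) : ℝ :=
  (G.transWt s.1 m.tgt : ℝ) + m.t * (G.locWt s.1 : ℝ)

def applyMove (G : SPTG) (s : G.Conf) (m : G.Move) : G.Conf := (m.tgt, s.2 + m.t)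

def deadlock (G : SPTG) (s : G.Conf) : Prop := ¬∃ m : G.Move, G.canMove s m

/-- A finite play is represented by its initial configuration together with the
list of successive moves; `ValidFrom s l` states that all these moves are legal. -/
def ValidFrom (G : SPTG) : G.Conf → List G.Move → Prop
  | _, [] => True
  | s, m :: l => G.canMove s m ∧ ValidFrom G (G.applyMove s m) l

/-- Last configuration of a finite play. -/
def endConf (G : SPTG) (s : G.Conf) (l : List G.Move) : G.Conf := l.foldl G.applyMove s

/-- Sum of the weights of the discrete transitions taken along a finite play. -/
def transWtSum (G : SPTG) : G.Conf → List G.Move → ℤ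
  | _, [] => 0
  | s, m :: l => G.transWt s.1 m.tgt + transWtSum G (G.applyMove s m) l

/-- Price of a finite play: the accumulated costs of its moves, plus the final cost
function evaluated at the last configuration if its location is final. -/
def finPrice (G : SPTG) : G.Conf → List G.Move → ℝ
  | s, [] => if G.isFin s.1 then G.finalCost s.1 s.2 else 0
  | s, m :: l => G.moveCost s m + finPrice G (G.applyMove s m) l

/-- A strategy of Min: it prescribes a legal move to every finite play ending in a
non-deadlock configuration owned by Min. -/
structure MinStrategy (G : SPTG) where
  move : G.Conf → List G.Move → Option G.Move
  legal : ∀ s l, G.validConf s → G.ValidFrom s l → G.isMin (G.endConf s l).1 →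
    ¬G.deadlock (G.endConf s l) → ∃ m, move s l = some m ∧ G.canMove (G.endConf s l) m

/-- A strategy of Max. -/
structure MaxStrategy (G : SPTG) where
  move : G.Conf → List G.Move → Option G.Move
  legal : ∀ s l, G.validConf s → G.ValidFrom s l → G.isMax (G.endConf s l).1 →
    ¬G.deadlock (G.endConf s l) → ∃ m, move s l = some m ∧ G.canMove (G.endConf s l) m

/-- One step of the play induced by a pair of strategies. -/
def step (G : SPTG) (σmin : MinStrategy G) (σmax : MaxStrategy G) (s : G.Conf)
    (l : List G.Move) : List G.Move :=
  if G.deadlock (G.endConf s l) then l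
  else if G.isMin (G.endConf s l).1 then
    match σmin.move s l with
    | some m => l ++ [m]
    | none => l
  else
    match σmax.move s l with
    | some m => l ++ [m]
    | none => l

/-- The successive finite prefixes of the unique play determined by an initial
configuration and a pair of strategies. -/
def hist (G : SPTG) (σmin : MinStrategy G) (σmax : MaxStrategy G) (s : G.Conf) :
    ℕ → List G.Move
  | 0 => []
  | n + 1 => G.step σmin σmax s (hist G σmin σmax s n)

/-- Price of the completed play determined by an initial configuration and a pair of
strategies: the price of the play if it reaches a final location, `+∞` otherwise. -/
def playCost (G : SPTG) (s : G.Conf) (σmin : MinStrategy G) (σmax : MaxStrategy G) :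
    EReal :=
  if h : ∃ n, G.isFin (G.endConf s (G.hist σmin σmax s n)).1 then
    ((G.finPrice s (G.hist σmin σmax s (Nat.find h)) : ℝ) : EReal)
  else ⊤

/-- Upper value. -/
def upperVal (G : SPTG) (s : G.Conf) : EReal :=
  ⨅ σmin : MinStrategy G, ⨆ σmax : MaxStrategy G, G.playCost s σmin σmax

/-- Lower value. -/
def lowerVal (G : SPTG) (s : G.Conf) : EReal :=
  ⨆ σmax : MaxStrategy G, ⨅ σmin : MinStrategy G, G.playCost s σmin σmax

/-- The value of the game (SPTGs are determined). -/
def val (G : SPTG) (ℓ : G.Loc) (ν : ℝ) : EReal := G.upperVal (ℓ, ν)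

/-- The finite play `(s, l)` is consistent with the Min strategy `σ`. -/
def consistentMin (G : SPTG) (σ : MinStrategy G) (s : G.Conf) (l : List G.Move) : Prop :=
  ∀ (l₁ : List G.Move) (m : G.Move) (l₂ : List G.Move), l = l₁ ++ m :: l₂ →
    G.isMin (G.endConf s l₁).1 → σ.move s l₁ = some m

/-- The finite play `(s, l)` is consistent with the Max strategy `σ`. -/
def consistentMax (G : SPTG) (σ : MaxStrategy G) (s : G.Conf) (l : List G.Move) : Prop :=
  ∀ (l₁ : List G.Move) (m : G.Move) (l₂ : List G.Move), l = l₁ ++ m :: l₂ →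
    G.isMax (G.endConf s l₁).1 → σ.move s l₁ = some m

/-- There is an infinite play from `s` consistent with the Min strategy `σ`. -/
def infConsMin (G : SPTG) (σ : MinStrategy G) (s : G.Conf) : Prop :=
  ∃ ρ : ℕ → G.Move, ∀ n : ℕ,
    G.ValidFrom s (List.ofFn fun i : Fin n => ρ i) ∧
    G.consistentMin σ s (List.ofFn fun i : Fin n => ρ i)

/-- `Cost(s, σ_Min)`: the supremum of the prices of the completed plays from `s`
consistent with `σ_Min` (finite completed plays end in a deadlock; they have price
`+∞` unless they end in a final location; infinite plays have price `+∞`). -/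
def minCost (G : SPTG) (σ : MinStrategy G) (s : G.Conf) : EReal :=
  (⨆ l : { l : List G.Move //
      G.ValidFrom s l ∧ G.consistentMin σ s l ∧ G.deadlock (G.endConf s l) },
    if G.isFin (G.endConf s l.1).1 then ((G.finPrice s l.1 : ℝ) : EReal) else ⊤) ⊔
  (if G.infConsMin σ s then (⊤ : EReal) else ⊥)

/-- `Cost(s, σ_Max)`: the infimum of the prices of the completed plays from `s`
consistent with `σ_Max`. -/
def maxCost (G : SPTG) (σ : MaxStrategy G) (s : G.Conf) : EReal :=
  ⨅ l : { l : List G.Move //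
      G.ValidFrom s l ∧ G.consistentMax σ s l ∧ G.deadlock (G.endConf s l) },
    if G.isFin (G.endConf s l.1).1 then ((G.finPrice s l.1 : ℝ) : EReal) else ⊤

/-- A finite positional (FP-)strategy: a memoryless strategy given by a function `f`
of the current configuration, together with, for each location, finitely many
rational endpoints `0 = ν_0 < ν_1 < ⋯ < ν_k = r` (all belonging to `pts`) such that
on each open interval and at each endpoint the strategy plays the same move, which is
either a fixed transition taken immediately or waiting until the next endpoint and
then taking a fixed transition. -/
structure FPStrategy (G : SPTG) where
  f : G.Conf → Option G.Move
  pts : Finset ℚ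
  zero_mem : (0 : ℚ) ∈ pts
  r_mem : ∃ q ∈ pts, (q : ℝ) = G.r
  pts_range : ∀ q ∈ pts, (0 : ℝ) ≤ (q : ℝ) ∧ (q : ℝ) ≤ G.r
  fp : ∀ ℓ : G.Loc, ∃ (k : ℕ) (ν : ℕ → ℚ) (δ : ℕ → G.Loc),
    (∀ i ≤ k, ν i ∈ pts) ∧ ν 0 = 0 ∧ ((ν k : ℝ) = G.r) ∧ (∀ i < k, ν i < ν (i + 1)) ∧
    (∀ i, 1 ≤ i → i ≤ k →
      (∀ x : ℝ, (ν (i - 1) : ℝ) < x → x < (ν i : ℝ) →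
        f (ℓ, x) = some ⟨0, δ (2 * i - 1)⟩) ∨
      (∀ x : ℝ, (ν (i - 1) : ℝ) < x → x < (ν i : ℝ) →
        f (ℓ, x) = some ⟨(ν i : ℝ) - x, δ (2 * i - 1)⟩)) ∧
    (∀ i < k, f (ℓ, (ν i : ℝ)) = some ⟨0, δ (2 * i)⟩ ∨
      f (ℓ, (ν i : ℝ)) = some ⟨(ν (i + 1) : ℝ) - (ν i : ℝ), δ (2 * i)⟩) ∧
    f (ℓ, (ν k : ℝ)) = some ⟨0, δ (2 * k)⟩

namespace FPStrategy

variable {G : SPTG}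

/-- `|σ| = |Int(σ)|`: the number of intervals (singletons and open intervals)
generated by the points of `σ`. -/
def size (σ : FPStrategy G) : ℕ := 2 * σ.pts.card - 1

/-- `σ` prescribes a legal move wherever Min has to play. -/
def legalMin (σ : FPStrategy G) : Prop :=
  ∀ s : G.Conf, G.validConf s → G.isMin s.1 → ¬G.deadlock s →
    ∃ m, σ.f s = some m ∧ G.canMove s m

/-- `σ` prescribes a legal move wherever Max has to play. -/
def legalMax (σ : FPStrategy G) : Prop :=
  ∀ s : G.Conf, G.validConf s → G.isMax s.1 → ¬G.deadlock s →
    ∃ m, σ.f s = some m ∧ G.canMove s m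

/-- The finite play `(s, l)` is consistent with `σ` viewed as a Min strategy. -/
def consMin (σ : FPStrategy G) (s : G.Conf) (l : List G.Move) : Prop :=
  ∀ (l₁ : List G.Move) (m : G.Move) (l₂ : List G.Move), l = l₁ ++ m :: l₂ →
    G.isMin (G.endConf s l₁).1 → σ.f (G.endConf s l₁) = some m

/-- The finite play `(s, l)` is consistent with `σ` viewed as a Max strategy. -/
def consMax (σ : FPStrategy G) (s : G.Conf) (l : List G.Move) : Prop :=
  ∀ (l₁ : List G.Move) (m : G.Move) (l₂ : List G.Move), l = l₁ ++ m :: l₂ →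
    G.isMax (G.endConf s l₁).1 → σ.f (G.endConf s l₁) = some m

/-- An NC-strategy of Min: an FP-strategy such that along every cycle consistent
with it whose endpoints have clock values in the same interval of `Int(σ)`, the sum
of the weights of the discrete transitions is at most `-1`. -/
def isNC (σ : FPStrategy G) : Prop :=
  σ.legalMin ∧
  ∀ (ℓ : G.Loc) (ν : ℝ) (l : List G.Move), l ≠ [] →
    G.ValidFrom (ℓ, ν) l → σ.consMin (ℓ, ν) l → (G.endConf (ℓ, ν) l).1 = ℓ →
    sameInt σ.pts ν (G.endConf (ℓ, ν) l).2 → G.transWtSum (ℓ, ν) l ≤ -1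

/-- The fake value of `σ` from `s`: the supremum of the prices of the plays from `s`
consistent with `σ` that reach a final location (`sup ∅ = -∞`). -/
def fakeVal (σ : FPStrategy G) (s : G.Conf) : EReal :=
  ⨆ l : { l : List G.Move //
      G.ValidFrom s l ∧ σ.consMin s l ∧ G.isFin (G.endConf s l).1 },
    ((G.finPrice s l.1 : ℝ) : EReal)

/-- `Cost(s, σ)` for `σ` viewed as a Max strategy. -/
def maxCost (σ : FPStrategy G) (s : G.Conf) : EReal :=
  ⨅ l : { l : List G.Move //
      G.ValidFrom s l ∧ σ.consMax s l ∧ G.deadlock (G.endConf s l) },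
    if G.isFin (G.endConf s l.1).1 then ((G.finPrice s l.1 : ℝ) : EReal) else ⊤

end FPStrategy

/-- `w_T`: the largest absolute value of a transition weight. -/
def wT (G : SPTG) : ℝ :=
  ⨆ p : G.Loc × G.Loc, if G.trans p.1 p.2 then |(G.transWt p.1 p.2 : ℝ)| else 0

/-- `w_L`: the largest absolute value of a (non-final) location weight. -/
def wL (G : SPTG) : ℝ :=
  ⨆ ℓ : G.Loc, if G.isFin ℓ then 0 else |(G.locWt ℓ : ℝ)|

/-- `w_F`: the largest absolute value of a final cost function on `[0,r]`. -/
def wF (G : SPTG) : ℝ :=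
  ⨆ ℓ : G.Loc, if G.isFin ℓ then max |G.finalCost ℓ 0| |G.finalCost ℓ G.r| else 0

/-- Slope of the value function of location `ℓ` between clock values `ν₁` and `ν₂`. -/
def slope (G : SPTG) (ℓ : G.Loc) (ν₁ ν₂ : ℝ) : ℝ :=
  ((G.val ℓ ν₂).toReal - (G.val ℓ ν₁).toReal) / (ν₂ - ν₁)

/-- A game is finitely optimal if Min has a fake-optimal NC-strategy, Max has an
optimal FP-strategy, and all value functions are cost functions. -/
def finitelyOptimal (G : SPTG) : Prop :=
  (∃ σ : FPStrategy G, σ.isNC ∧ ∀ s : G.Conf, G.validConf s → σ.fakeVal s = G.val s.1 s.2) ∧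
  (∃ σ : FPStrategy G, σ.legalMax ∧ ∀ s : G.Conf, G.validConf s → σ.maxCost s = G.val s.1 s.2) ∧
  ∀ ℓ : G.Loc, CostFunctionOn (G.val ℓ) 0 G.r

end SPTG

namespace SPTG

/-- The operator `F` of the value-iteration scheme (for a fixed clock value `ν`). -/
def oper (G : SPTG) (ν : ℝ) (x : G.Loc → EReal) (ℓ : G.Loc) : EReal :=
  if G.isFin ℓ then ((G.finalCost ℓ ν : ℝ) : EReal)
  else if G.isMax ℓ then
    ⨆ ℓ' : { ℓ' : G.Loc // G.trans ℓ ℓ' }, (((G.transWt ℓ ℓ'.1 : ℝ) : EReal) + x ℓ'.1)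
  else
    ⨅ ℓ' : { ℓ' : G.Loc // G.trans ℓ ℓ' }, (((G.transWt ℓ ℓ'.1 : ℝ) : EReal) + x ℓ'.1)

/-- The sequence `x⁽⁰⁾, x⁽¹⁾, …`: `x⁽⁰⁾_ℓ = +∞` for non-final `ℓ`,
`x⁽⁰⁾_ℓ = φ_ℓ(ν)` for final `ℓ`, and `x⁽ⁱ⁾ = F(x⁽ⁱ⁻¹⁾)`. -/
def iterSeq (G : SPTG) (ν : ℝ) : ℕ → G.Loc → EReal
  | 0 => fun ℓ => if G.isFin ℓ then ((G.finalCost ℓ ν : ℝ) : EReal) else ⊤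
  | i + 1 => G.oper ν (iterSeq G ν i)

/-- `Cost^i` of the completed play determined by a pair of strategies: its price if
it reaches a final location within `i` steps, and `+∞` otherwise. -/
def playCostBdd (G : SPTG) (i : ℕ) (s : G.Conf) (σmin : MinStrategy G)
    (σmax : MaxStrategy G) : EReal :=
  if h : ∃ k, k ≤ i ∧ G.isFin (G.endConf s (G.hist σmin σmax s k)).1 then
    ((G.finPrice s (G.hist σmin σmax s (Nat.find h)) : ℝ) : EReal)
  else ⊤

/-- The `i`-step bounded value `V^i_ν(ℓ)`. -/
def boundedVal (G : SPTG) (i : ℕ) (ν : ℝ) (ℓ : G.Loc) : EReal :=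
  ⨅ σmin : MinStrategy G, ⨆ σmax : MaxStrategy G, G.playCostBdd i (ℓ, ν) σmin σmax

end SPTG

namespace SPTGAux
open SPTG

variable (G : SPTG)

/-- One-step attractor operator. -/
def F (S : Set G.Loc) : Set G.Loc :=
  S ∪ {ℓ | G.isMin ℓ ∧ ∃ ℓ', G.trans ℓ ℓ' ∧ ℓ' ∈ S}
    ∪ {ℓ | G.isMax ℓ ∧ (∃ ℓ', G.trans ℓ ℓ') ∧ ∀ ℓ', G.trans ℓ ℓ' → ℓ' ∈ S}

/-- The attractor levels. -/
def A : ℕ → Set G.Loc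
  | 0 => {ℓ | G.isFin ℓ}
  | n + 1 => F G (A n)

/-- The full attractor. -/
def att : Set G.Loc := {ℓ | ∃ n, ℓ ∈ A G n}

/-- The rank of a location in the attractor. -/
def rk (ℓ : G.Loc) : ℕ := sInf {n | ℓ ∈ A G n}

variable {G}

lemma subset_F {S : Set G.Loc} : S ⊆ F G S := fun _ h => Or.inl (Or.inl h)

lemma A_succ (n : ℕ) : A G (n + 1) = F G (A G n) := rfl

lemma mem_A_min {ℓ ℓ' : G.Loc} {n : ℕ} (hm : G.isMin ℓ) (htr : G.trans ℓ ℓ')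
    (h : ℓ' ∈ A G n) : ℓ ∈ A G (n + 1) :=
  Or.inl (Or.inr ⟨hm, ℓ', htr, h⟩)

lemma mem_A_max {ℓ : G.Loc} {n : ℕ} (hm : G.isMax ℓ) (he : ∃ ℓ', G.trans ℓ ℓ')
    (h : ∀ ℓ', G.trans ℓ ℓ' → ℓ' ∈ A G n) : ℓ ∈ A G (n + 1) :=
  Or.inr ⟨hm, he, h⟩

lemma A_mono : ∀ {m n : ℕ}, m ≤ n → A G m ⊆ A G n := by
  intro m n h
  induction n with
  | zero => simp_all
  | succ n ih =>
    rcases Nat.lt_or_ge m (n + 1) with h' | h'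
    · exact (ih (Nat.lt_succ_iff.mp h')).trans subset_F
    · have : m = n + 1 := le_antisymm h h'
      subst this; exact subset_of_eq rfl

lemma mem_A_rk {ℓ : G.Loc} (h : ℓ ∈ att G) : ℓ ∈ A G (rk G ℓ) := Nat.sInf_mem h

lemma rk_le {ℓ : G.Loc} {n : ℕ} (h : ℓ ∈ A G n) : rk G ℓ ≤ n := Nat.sInf_le h

lemma not_mem_A_of_lt_rk {ℓ : G.Loc} {n : ℕ} (h : n < rk G ℓ) : ℓ ∉ A G n :=
  fun hm => absurd (rk_le hm) (not_le.mpr h)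

lemma fin_att {ℓ : G.Loc} (h : G.isFin ℓ) : ℓ ∈ att G := ⟨0, h⟩

lemma min_not_fin {ℓ : G.Loc} (h : G.isMin ℓ) : ¬G.isFin ℓ := by
  rcases G.partition ℓ with h' | h' | h' <;> tauto

lemma max_not_fin {ℓ : G.Loc} (h : G.isMax ℓ) : ¬G.isFin ℓ := by
  rcases G.partition ℓ with h' | h' | h' <;> tauto

lemma min_not_max {ℓ : G.Loc} (h : G.isMin ℓ) : ¬G.isMax ℓ := by
  rcases G.partition ℓ with h' | h' | h' <;> tauto

lemma min_or_max {ℓ : G.Loc} (h : ¬G.isFin ℓ) : G.isMin ℓ ∨ G.isMax ℓ := by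
  rcases G.partition ℓ with h' | h' | h' <;> tauto

/-- From a Min location in the attractor (necessarily non-final of positive rank),
there is a transition strictly decreasing the rank. -/
lemma min_rk {ℓ : G.Loc} (hm : G.isMin ℓ) (ha : ℓ ∈ att G) :
    ∃ ℓ', G.trans ℓ ℓ' ∧ ℓ' ∈ att G ∧ rk G ℓ' < rk G ℓ := by
  have hnf : ¬G.isFin ℓ := min_not_fin hm
  have h0 : ℓ ∈ A G (rk G ℓ) := mem_A_rk ha
  cases hn : rk G ℓ with
  | zero => rw [hn] at h0; exact absurd h0 hnf
  | succ m =>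
    rw [hn] at h0
    have hnm : ℓ ∉ A G m := not_mem_A_of_lt_rk (by omega)
    rcases h0 with (h0 | h0) | h0
    · exact absurd h0 hnm
    · obtain ⟨_, ℓ', htr, hmem⟩ := h0
      exact ⟨ℓ', htr, ⟨m, hmem⟩, by have := rk_le hmem; omega⟩
    · exact absurd h0.1 (min_not_max hm)

/-- From a Max location in the attractor, every transition strictly decreases the
rank, and there is at least one transition. -/
lemma max_rk {ℓ : G.Loc} (hm : G.isMax ℓ) (ha : ℓ ∈ att G) :
    (∃ ℓ', G.trans ℓ ℓ') ∧ ∀ ℓ', G.trans ℓ ℓ' → ℓ' ∈ att G ∧ rk G ℓ' < rk G ℓ := by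
  have hnf : ¬G.isFin ℓ := max_not_fin hm
  have h0 : ℓ ∈ A G (rk G ℓ) := mem_A_rk ha
  cases hn : rk G ℓ with
  | zero => rw [hn] at h0; exact absurd h0 hnf
  | succ m =>
    rw [hn] at h0
    have hnm : ℓ ∉ A G m := not_mem_A_of_lt_rk (by omega)
    rcases h0 with (h0 | h0) | h0
    · exact absurd h0 hnm
    · exact absurd ((min_not_max h0.1) hm) (by simp)
    · obtain ⟨_, he, hall⟩ := h0
      exact ⟨he, fun ℓ' htr => ⟨⟨m, hall ℓ' htr⟩, by have := rk_le (hall ℓ' htr); omega⟩⟩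

lemma min_out {ℓ ℓ' : G.Loc} (hm : G.isMin ℓ) (ha : ℓ ∉ att G) (htr : G.trans ℓ ℓ') :
    ℓ' ∉ att G := fun ⟨n, h⟩ => ha ⟨n + 1, mem_A_min hm htr h⟩

lemma max_out {ℓ : G.Loc} (hm : G.isMax ℓ) (ha : ℓ ∉ att G)
    (he : ∃ ℓ', G.trans ℓ ℓ') : ∃ ℓ', G.trans ℓ ℓ' ∧ ℓ' ∉ att G := by
  by_contra hc
  push_neg at hc
  refine ha ⟨Finset.univ.sup (rk G) + 1, mem_A_max hm he fun ℓ' htr => ?_⟩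
  have hin : ℓ' ∈ att G := hc ℓ' htr
  exact A_mono (le_trans (le_refl _) (Finset.le_sup (Finset.mem_univ ℓ'))) (mem_A_rk hin)

lemma A_stab {n : ℕ} (h : A G n = A G (n + 1)) : ∀ m, A G (n + m) = A G n := by
  intro m
  induction m with
  | zero => rfl
  | succ m ih => calc A G (n + (m + 1)) = F G (A G (n + m)) := rfl
                  _ = F G (A G n) := by rw [ih]
                  _ = A G n := h.symm

lemma A_strict {ℓ : G.Loc} (ha : ℓ ∈ att G) {k : ℕ} (hk : k < rk G ℓ) :
    A G k ≠ A G (k + 1) := by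
  intro h
  have h2 : ℓ ∈ A G (k + (rk G ℓ - k)) := by
    rw [show k + (rk G ℓ - k) = rk G ℓ by omega]; exact mem_A_rk ha
  rw [A_stab h] at h2
  exact absurd (rk_le h2) (by omega)

lemma rk_bound {ℓ : G.Loc} (ha : ℓ ∈ att G) : rk G ℓ ≤ Fintype.card G.Loc - 1 := by
  cases hn : rk G ℓ with
  | zero => omega
  | succ d =>
    -- A 0 is nonempty
    have h01 : A G 0 ≠ A G 1 := by
      have := A_strict ha (k := 0) (by omega); simpa using this
    have hA0 : (A G 0).Nonempty := by
      by_contra hne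
      rw [Set.not_nonempty_iff_eq_empty] at hne
      apply h01
      rw [hne]
      ext x
      simp only [Set.mem_empty_iff_false, false_iff]
      intro hx
      rcases hx with (hx | hx) | hx
      · rw [hne] at hx; exact hx
      · obtain ⟨_, ℓ', _, hmem⟩ := hx; rw [hne] at hmem; exact hmem
      · obtain ⟨_, ⟨ℓ', htr⟩, hall⟩ := hx
        have := hall ℓ' htr; rw [hne] at this; exact this
    have hchain : ∀ k, k ≤ rk G ℓ → k + 1 ≤ (A G k).ncard := by
      intro k hk
      induction k with
      | zero => have := (Set.ncard_pos (Set.toFinite _)).mpr hA0; omega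
      | succ k ih =>
        have hlt : (A G k).ncard < (A G (k + 1)).ncard :=
          Set.ncard_lt_ncard (ssubset_of_subset_of_ne (A_mono (by omega))
            (A_strict ha (by omega))) (Set.toFinite _)
        have := ih (by omega)
        omega
    have hle : (A G (rk G ℓ)).ncard ≤ Fintype.card G.Loc := by
      have := Set.ncard_le_ncard (Set.subset_univ (A G (rk G ℓ))) (Set.toFinite _)
      rwa [Set.ncard_univ, Nat.card_eq_fintype_card] at this
    have := hchain (rk G ℓ) le_rfl
    omega

end SPTGAux
namespace SPTGAux
open SPTG

variable {G : SPTG}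

lemma endConf_nil (s : G.Conf) : G.endConf s [] = s := rfl

lemma endConf_cons (s : G.Conf) (m : G.Move) (l : List G.Move) :
    G.endConf s (m :: l) = G.endConf (G.applyMove s m) l := rfl

lemma endConf_append (s : G.Conf) (l : List G.Move) (m : G.Move) :
    G.endConf s (l ++ [m]) = G.applyMove (G.endConf s l) m := by
  simp [SPTG.endConf, List.foldl_append]

lemma validConf_apply {s : G.Conf} {m : G.Move} (hv : G.validConf s)
    (hm : G.canMove s m) : G.validConf (G.applyMove s m) :=
  ⟨add_nonneg hv.1 hm.1, hm.2.1⟩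

lemma validConf_endConf {s : G.Conf} {l : List G.Move} (hv : G.validConf s)
    (hvf : G.ValidFrom s l) : G.validConf (G.endConf s l) := by
  induction l generalizing s with
  | nil => exact hv
  | cons m l ih => exact ih (validConf_apply hv hvf.1) hvf.2

lemma validFrom_append {s : G.Conf} {l : List G.Move} {m : G.Move}
    (h : G.ValidFrom s l) (hm : G.canMove (G.endConf s l) m) :
    G.ValidFrom s (l ++ [m]) := by
  induction l generalizing s with
  | nil => exact ⟨hm, trivial⟩
  | cons a l ih => exact ⟨h.1, ih h.2 hm⟩

lemma not_deadlock_of_trans {s : G.Conf} {ℓ' : G.Loc} (hv : G.validConf s)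
    (htr : G.trans s.1 ℓ') : ¬G.deadlock s :=
  fun hd => hd ⟨⟨0, ℓ'⟩, le_refl 0, by simpa using hv.2, htr, fun _ => rfl⟩

lemma fin_deadlock {s : G.Conf} (hf : G.isFin s.1) : G.deadlock s :=
  fun ⟨_, hm⟩ => G.trans_not_fin _ _ hm.2.2.1 hf

section Urgent

variable (hurg : ∀ ℓ : G.Loc, ¬G.isFin ℓ → G.isUrg ℓ)
include hurg

lemma t_eq_zero {s : G.Conf} {m : G.Move} (hm : G.canMove s m) : m.t = 0 :=
  hm.2.2.2 (hurg _ (G.trans_not_fin _ _ hm.2.2.1))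

lemma moveCost_eq {s : G.Conf} {m : G.Move} (hm : G.canMove s m) :
    G.moveCost s m = (G.transWt s.1 m.tgt : ℝ) := by
  simp [SPTG.moveCost, t_eq_zero hurg hm]

lemma clock_const {s : G.Conf} {l : List G.Move} (hvf : G.ValidFrom s l) :
    (G.endConf s l).2 = s.2 := by
  induction l generalizing s with
  | nil => rfl
  | cons m l ih =>
    have := ih hvf.2
    rw [endConf_cons, this, SPTG.applyMove, t_eq_zero hurg hvf.1, add_zero]

end Urgent

lemma transWt_le_wT {ℓ ℓ' : G.Loc} (h : G.trans ℓ ℓ') :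
    (G.transWt ℓ ℓ' : ℝ) ≤ G.wT := by
  have hb : BddAbove (Set.range fun p : G.Loc × G.Loc =>
      if G.trans p.1 p.2 then |(G.transWt p.1 p.2 : ℝ)| else 0) :=
    (Set.finite_range _).bddAbove
  calc (G.transWt ℓ ℓ' : ℝ) ≤ |(G.transWt ℓ ℓ' : ℝ)| := le_abs_self _
    _ = if G.trans ℓ ℓ' then |(G.transWt ℓ ℓ' : ℝ)| else 0 := by rw [if_pos h]
    _ ≤ G.wT := le_ciSup hb (ℓ, ℓ')

lemma wT_nonneg [Nonempty G.Loc] : 0 ≤ G.wT := by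
  have hb : BddAbove (Set.range fun p : G.Loc × G.Loc =>
      if G.trans p.1 p.2 then |(G.transWt p.1 p.2 : ℝ)| else 0) :=
    (Set.finite_range _).bddAbove
  refine le_trans ?_ (le_ciSup hb (Classical.arbitrary _))
  split <;> positivity

lemma finalCost_le_wF {ℓ : G.Loc} {x : ℝ} (hf : G.isFin ℓ) (h0 : 0 ≤ x)
    (hr : x ≤ G.r) : G.finalCost ℓ x ≤ G.wF := by
  have hb : BddAbove (Set.range fun ℓ : G.Loc =>
      if G.isFin ℓ then max |G.finalCost ℓ 0| |G.finalCost ℓ G.r| else 0) :=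
    (Set.finite_range _).bddAbove
  have key : G.finalCost ℓ x ≤ max |G.finalCost ℓ 0| |G.finalCost ℓ G.r| := by
    rcases le_or_gt 0 (G.finSlope ℓ) with hs | hs
    · calc G.finalCost ℓ x ≤ G.finalCost ℓ G.r := by
            unfold SPTG.finalCost; nlinarith
        _ ≤ |G.finalCost ℓ G.r| := le_abs_self _
        _ ≤ _ := le_max_right _ _
    · calc G.finalCost ℓ x ≤ G.finalCost ℓ 0 := by
            unfold SPTG.finalCost; nlinarith
        _ ≤ |G.finalCost ℓ 0| := le_abs_self _
        _ ≤ _ := le_max_left _ _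
  calc G.finalCost ℓ x ≤ max |G.finalCost ℓ 0| |G.finalCost ℓ G.r| := key
    _ = if G.isFin ℓ then max |G.finalCost ℓ 0| |G.finalCost ℓ G.r| else 0 := by
        rw [if_pos hf]
    _ ≤ G.wF := le_ciSup hb ℓ

lemma finPrice_le (hurg : ∀ ℓ : G.Loc, ¬G.isFin ℓ → G.isUrg ℓ) :
    ∀ (l : List G.Move) (s : G.Conf), G.validConf s → G.ValidFrom s l →
      G.isFin (G.endConf s l).1 →
      G.finPrice s l ≤ (l.length : ℝ) * G.wT + G.wF := by
  intro l
  induction l with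
  | nil =>
    intro s hv hvf hf
    rw [endConf_nil] at hf
    simp only [SPTG.finPrice, if_pos hf, List.length_nil, Nat.cast_zero, zero_mul, zero_add]
    exact finalCost_le_wF hf hv.1 hv.2
  | cons m l ih =>
    intro s hv hvf hf
    have : Nonempty G.Loc := ⟨m.tgt⟩
    have h1 : G.finPrice s (m :: l) = G.moveCost s m + G.finPrice (G.applyMove s m) l := rfl
    have h2 := ih (G.applyMove s m) (validConf_apply hv hvf.1) hvf.2 hf
    have h3 : G.moveCost s m ≤ G.wT := by
      rw [moveCost_eq hurg hvf.1]; exact transWt_le_wT hvf.1.2.2.1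
    rw [h1]
    have : ((m :: l).length : ℝ) = (l.length : ℝ) + 1 := by simp
    rw [this]
    linarith

end SPTGAux
namespace SPTGAux
open SPTG

variable {G : SPTG}

lemma canMove_zero {c : G.Conf} {ℓ' : G.Loc} (hv : G.validConf c)
    (htr : G.trans c.1 ℓ') : G.canMove c ⟨0, ℓ'⟩ :=
  ⟨le_refl 0, by simpa using hv.2, htr, fun _ => rfl⟩

/-- The attractor strategy of Min. -/
noncomputable def minMove (G : SPTG) (c : G.Conf) : Option G.Move :=
  if h : G.isMin c.1 ∧ c.1 ∈ att G then some ⟨0, (min_rk h.1 h.2).choose⟩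
  else if h2 : ∃ m, G.canMove c m then some h2.choose else none

lemma minMove_spec {c : G.Conf} (h : G.isMin c.1 ∧ c.1 ∈ att G) :
    ∃ ℓ', minMove G c = some ⟨0, ℓ'⟩ ∧ G.trans c.1 ℓ' ∧ ℓ' ∈ att G ∧
      rk G ℓ' < rk G c.1 :=
  ⟨(min_rk h.1 h.2).choose, dif_pos h, (min_rk h.1 h.2).choose_spec⟩

noncomputable def minStrat (G : SPTG) : MinStrategy G where
  move := fun s l => minMove G (G.endConf s l)
  legal := by
    intro s l hv hvf hmin hnd
    have hvc := validConf_endConf hv hvf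
    by_cases hc : (G.endConf s l).1 ∈ att G
    · obtain ⟨ℓ', he, htr, _⟩ := minMove_spec ⟨hmin, hc⟩
      exact ⟨_, he, canMove_zero hvc htr⟩
    · have h2 : ∃ m, G.canMove (G.endConf s l) m := not_not.mp hnd
      refine ⟨h2.choose, ?_, h2.choose_spec⟩
      simp only [minMove]
      rw [dif_neg (fun h => hc h.2), dif_pos h2]

/-- The escaping strategy of Max (used when the initial location is outside the
attractor). -/
noncomputable def maxMoveBad (G : SPTG) (c : G.Conf) : Option G.Move :=
  if h : G.isMax c.1 ∧ c.1 ∉ att G ∧ ∃ m, G.canMove c m then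
    some ⟨0, (max_out h.1 h.2.1 ⟨h.2.2.choose.tgt, h.2.2.choose_spec.2.2.1⟩).choose⟩
  else if h2 : ∃ m, G.canMove c m then some h2.choose else none

lemma maxMoveBad_spec {c : G.Conf} (h : G.isMax c.1 ∧ c.1 ∉ att G ∧ ∃ m, G.canMove c m) :
    ∃ ℓ', maxMoveBad G c = some ⟨0, ℓ'⟩ ∧ G.trans c.1 ℓ' ∧ ℓ' ∉ att G :=
  ⟨_, dif_pos h, (max_out h.1 h.2.1 ⟨h.2.2.choose.tgt, h.2.2.choose_spec.2.2.1⟩).choose_spec⟩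

noncomputable def maxStratBad (G : SPTG) : MaxStrategy G where
  move := fun s l => maxMoveBad G (G.endConf s l)
  legal := by
    intro s l hv hvf hmax hnd
    have hvc := validConf_endConf hv hvf
    have h2 : ∃ m, G.canMove (G.endConf s l) m := not_not.mp hnd
    by_cases hc : (G.endConf s l).1 ∈ att G
    · refine ⟨h2.choose, ?_, h2.choose_spec⟩
      simp only [maxMoveBad]
      rw [dif_neg (fun h => h.2.1 hc), dif_pos h2]
    · obtain ⟨ℓ', he, htr, _⟩ := maxMoveBad_spec ⟨hmax, hc, h2⟩
      exact ⟨_, he, canMove_zero hvc htr⟩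

lemma hist_succ (σm : MinStrategy G) (σM : MaxStrategy G) (s : G.Conf) (n : ℕ) :
    G.hist σm σM s (n + 1) = G.step σm σM s (G.hist σm σM s n) := rfl

lemma step_of_deadlock {σm : MinStrategy G} {σM : MaxStrategy G} {s : G.Conf}
    {l : List G.Move} (hd : G.deadlock (G.endConf s l)) : G.step σm σM s l = l := by
  unfold SPTG.step; rw [if_pos hd]

lemma step_min {σm : MinStrategy G} {σM : MaxStrategy G} {s : G.Conf}
    {l : List G.Move} {m : G.Move} (hd : ¬G.deadlock (G.endConf s l))
    (hm : G.isMin (G.endConf s l).1) (he : σm.move s l = some m) :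
    G.step σm σM s l = l ++ [m] := by
  unfold SPTG.step; rw [if_neg hd, if_pos hm, he]

lemma step_max {σm : MinStrategy G} {σM : MaxStrategy G} {s : G.Conf}
    {l : List G.Move} {m : G.Move} (hd : ¬G.deadlock (G.endConf s l))
    (hm : ¬G.isMin (G.endConf s l).1) (he : σM.move s l = some m) :
    G.step σm σM s l = l ++ [m] := by
  unfold SPTG.step; rw [if_neg hd, if_neg hm, he]

lemma hist_validFrom (σm : MinStrategy G) (σM : MaxStrategy G) {s : G.Conf}
    (hv : G.validConf s) : ∀ n, G.ValidFrom s (G.hist σm σM s n) := by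
  intro n
  induction n with
  | zero => trivial
  | succ n ih =>
    by_cases hd : G.deadlock (G.endConf s (G.hist σm σM s n))
    · rw [hist_succ, step_of_deadlock hd]; exact ih
    · by_cases hm : G.isMin (G.endConf s (G.hist σm σM s n)).1
      · obtain ⟨m, he, hc⟩ := σm.legal s _ hv ih hm hd
        rw [hist_succ, step_min hd hm he]
        exact validFrom_append ih hc
      · have hmax : G.isMax (G.endConf s (G.hist σm σM s n)).1 := by
          rcases min_or_max (fun hf => hd (fin_deadlock hf)) with h | h
          · exact absurd h hm
          · exact h
        obtain ⟨m, he, hc⟩ := σM.legal s _ hv ih hmax hd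
        rw [hist_succ, step_max hd hm he]
        exact validFrom_append ih hc

lemma step_length (σm : MinStrategy G) (σM : MaxStrategy G) (s : G.Conf)
    (l : List G.Move) : (G.step σm σM s l).length ≤ l.length + 1 := by
  unfold SPTG.step
  split_ifs with h1 h2
  · omega
  · cases σm.move s l <;> simp
  · cases σM.move s l <;> simp

lemma hist_length (σm : MinStrategy G) (σM : MaxStrategy G) (s : G.Conf) :
    ∀ n, (G.hist σm σM s n).length ≤ n := by
  intro n
  induction n with
  | zero => simp [SPTG.hist]
  | succ n ih =>
    have := step_length σm σM s (G.hist σm σM s n)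
    rw [hist_succ]
    omega

end SPTGAux
open SPTGAux

open SPTG in
/-- **Lemma: bound on the `(|L|-1)`-step value.** In an `r`-SPTG with
only urgent (non-final) locations, if `Val_G(ℓ,ν) < +∞` then
`V^{|L|-1}_ν(ℓ) ≤ (|L|-1)·w_T + w_F`. -/
theorem urgent_bounded_value_bound (G : SPTG) (hq : ∃ q : ℚ, G.r = (q : ℝ))
    (hrat : G.ratFinal) (hurg : ∀ ℓ : G.Loc, ¬G.isFin ℓ → G.isUrg ℓ)
    (ν : ℝ) (hν0 : 0 ≤ ν) (hνr : ν ≤ G.r) (ℓ : G.Loc)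
    (hfin : G.val ℓ ν ≠ ⊤) :
    G.boundedVal (Fintype.card G.Loc - 1) ν ℓ ≤
      ((((Fintype.card G.Loc : ℝ) - 1) * G.wT + G.wF : ℝ) : EReal) := by
  have hLne : Nonempty G.Loc := ⟨ℓ⟩
  have hv : G.validConf (ℓ, ν) := ⟨hν0, hνr⟩
  -- Step 1: `ℓ` lies in the attractor of the final locations.
  have hatt : ℓ ∈ att G := by
    by_contra hna
    apply hfin
    simp only [SPTG.val, SPTG.upperVal]
    rw [iInf_eq_top]
    intro σmin
    rw [eq_top_iff]
    have key : ∀ n, (G.endConf (ℓ, ν) (G.hist σmin (maxStratBad G) (ℓ, ν) n)).1 ∉ att G := by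
      intro n
      induction n with
      | zero => exact hna
      | succ n ih =>
        have hvf := hist_validFrom σmin (maxStratBad G) hv n
        have hvc := validConf_endConf hv hvf
        by_cases hd : G.deadlock (G.endConf (ℓ, ν) (G.hist σmin (maxStratBad G) (ℓ, ν) n))
        · rw [hist_succ, step_of_deadlock hd]; exact ih
        · have h2 : ∃ m, G.canMove (G.endConf (ℓ, ν) (G.hist σmin (maxStratBad G) (ℓ, ν) n)) m :=
            not_not.mp hd
          by_cases hm : G.isMin (G.endConf (ℓ, ν) (G.hist σmin (maxStratBad G) (ℓ, ν) n)).1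
          · obtain ⟨m, he, hc⟩ := σmin.legal (ℓ, ν) _ hv hvf hm hd
            rw [hist_succ, step_min hd hm he, endConf_append]
            exact min_out hm ih hc.2.2.1
          · have hmax : G.isMax (G.endConf (ℓ, ν) (G.hist σmin (maxStratBad G) (ℓ, ν) n)).1 := by
              rcases min_or_max (fun hf => hd (fin_deadlock hf)) with h | h
              · exact absurd h hm
              · exact h
            obtain ⟨ℓ', he, htr, hout⟩ := maxMoveBad_spec ⟨hmax, ih, h2⟩
            have he' : (maxStratBad G).move (ℓ, ν) (G.hist σmin (maxStratBad G) (ℓ, ν) n)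
                = some ⟨0, ℓ'⟩ := he
            rw [hist_succ, step_max hd hm he', endConf_append]
            exact hout
    have hne : ¬∃ n, G.isFin (G.endConf (ℓ, ν) (G.hist σmin (maxStratBad G) (ℓ, ν) n)).1 :=
      fun ⟨n, hn⟩ => key n (fin_att hn)
    have htop : G.playCost (ℓ, ν) σmin (maxStratBad G) = ⊤ := by
      simp only [SPTG.playCost]
      rw [dif_neg hne]
    calc (⊤ : EReal) = G.playCost (ℓ, ν) σmin (maxStratBad G) := htop.symm
      _ ≤ ⨆ σmax, G.playCost (ℓ, ν) σmin σmax := le_iSup _ _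
  -- Step 2: play the attractor strategy.
  have hrk : rk G ℓ ≤ Fintype.card G.Loc - 1 := rk_bound hatt
  simp only [SPTG.boundedVal]
  refine iInf_le_of_le (minStrat G) (iSup_le fun σmax => ?_)
  have inv : ∀ n,
      (∃ j ≤ n, G.isFin (G.endConf (ℓ, ν) (G.hist (minStrat G) σmax (ℓ, ν) j)).1) ∨
      ((G.endConf (ℓ, ν) (G.hist (minStrat G) σmax (ℓ, ν) n)).1 ∈ att G ∧
        rk G (G.endConf (ℓ, ν) (G.hist (minStrat G) σmax (ℓ, ν) n)).1 + n ≤ rk G ℓ) := by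
    intro n
    induction n with
    | zero => exact Or.inr ⟨hatt, by simp [SPTG.endConf, SPTG.hist]⟩
    | succ n ih =>
      rcases ih with ⟨j, hj, hf⟩ | ⟨hc, hrk'⟩
      · exact Or.inl ⟨j, by omega, hf⟩
      · have hvf := hist_validFrom (minStrat G) σmax hv n
        have hvc := validConf_endConf hv hvf
        by_cases hf : G.isFin (G.endConf (ℓ, ν) (G.hist (minStrat G) σmax (ℓ, ν) n)).1
        · exact Or.inl ⟨n, by omega, hf⟩
        · right
          rcases min_or_max hf with hm | hm
          · obtain ⟨ℓ', he, htr, hatt', hlt⟩ := minMove_spec ⟨hm, hc⟩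
            have hd : ¬G.deadlock _ := not_deadlock_of_trans hvc htr
            have he' : (minStrat G).move (ℓ, ν) (G.hist (minStrat G) σmax (ℓ, ν) n)
                = some ⟨0, ℓ'⟩ := he
            rw [hist_succ, step_min hd hm he', endConf_append]
            simp only [SPTG.applyMove]
            exact ⟨hatt', by omega⟩
          · obtain ⟨⟨ℓ'', htr''⟩, hall⟩ := max_rk hm hc
            have hd : ¬G.deadlock _ := not_deadlock_of_trans hvc htr''
            obtain ⟨m, he, hcm⟩ := σmax.legal (ℓ, ν) _ hv hvf hm hd
            rw [hist_succ, step_max hd (fun h => min_not_max h hm) he, endConf_append]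
            simp only [SPTG.applyMove]
            obtain ⟨ha', hlt⟩ := hall m.tgt hcm.2.2.1
            exact ⟨ha', by omega⟩
  have hex : ∃ k, k ≤ Fintype.card G.Loc - 1 ∧
      G.isFin (G.endConf (ℓ, ν) (G.hist (minStrat G) σmax (ℓ, ν) k)).1 := by
    rcases inv (rk G ℓ) with ⟨j, hj, hf⟩ | ⟨hc, hr⟩
    · exact ⟨j, by omega, hf⟩
    · have h0 : rk G (G.endConf (ℓ, ν) (G.hist (minStrat G) σmax (ℓ, ν) (rk G ℓ))).1 = 0 := by
        omega
      have hf := mem_A_rk hc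
      rw [h0] at hf
      exact ⟨rk G ℓ, hrk, hf⟩
  simp only [SPTG.playCostBdd]
  rw [dif_pos hex]
  have hspec := Nat.find_spec hex
  have hcard : 1 ≤ Fintype.card G.Loc := Fintype.card_pos
  have hlen : ((G.hist (minStrat G) σmax (ℓ, ν) (Nat.find hex)).length : ℝ)
      ≤ (Fintype.card G.Loc : ℝ) - 1 := by
    have h1 : (G.hist (minStrat G) σmax (ℓ, ν) (Nat.find hex)).length
        ≤ Fintype.card G.Loc - 1 :=
      le_trans (hist_length (minStrat G) σmax (ℓ, ν) (Nat.find hex)) hspec.1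
    calc ((G.hist (minStrat G) σmax (ℓ, ν) (Nat.find hex)).length : ℝ)
        ≤ ((Fintype.card G.Loc - 1 : ℕ) : ℝ) := by exact_mod_cast h1
      _ = (Fintype.card G.Loc : ℝ) - 1 := by
          rw [Nat.cast_sub hcard, Nat.cast_one]
  have hfp := finPrice_le hurg _ (ℓ, ν) hv
    (hist_validFrom (minStrat G) σmax hv (Nat.find hex)) hspec.2
  have hw : (0 : ℝ) ≤ G.wT := wT_nonneg
  have hb : G.finPrice (ℓ, ν) (G.hist (minStrat G) σmax (ℓ, ν) (Nat.find hex))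
      ≤ ((Fintype.card G.Loc : ℝ) - 1) * G.wT + G.wF := by
    nlinarith [mul_le_mul_of_nonneg_right hlen hw]
  exact EReal.coe_le_coe_iff.mpr hb
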